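/- Fix 0 < r < 1 and define β(r,p) := ln((1−p)/(1−rp)) / (ln r + ln((1−p)/(1−rp))) for 0 < p < 1. Then rp < β(r,p) < p, and D(β(r,p) ‖ p) = D(β(r,p) ‖ rp), where D is the binary relative entropy. -/

import Mathlib

/-- Binary relative entropy. -/
noncomputable def binRelEnt (p q : ℝ) : ℝ :=
  p * Real.log (p / q) + (1 - p) * Real.log ((1 - p) / (1 - q))

/-- The function β(r,p). -/
noncomputable def betaFn (r p : ℝ) : ℝ :=
  Real.log ((1 - p) / (1 - r * p)) / (Real.log r + Real.log ((1 - p) / (1 - r * p)))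

theorem stmt_17 (r p : ℝ) (hr0 : 0 < r) (hr1 : r < 1) (hp0 : 0 < p) (hp1 : p < 1) :
    r * p < betaFn r p ∧ betaFn r p < p ∧
      binRelEnt (betaFn r p) p = binRelEnt (betaFn r p) (r * p) := by
  have hp' : 0 < 1 - p := by linarith
  have hrp : r * p < p := by nlinarith
  have hrp0 : 0 < r * p := mul_pos hr0 hp0
  have hrp' : 0 < 1 - r * p := by linarith
  set a := Real.log ((1 - p) / (1 - r * p)) with ha
  set b := Real.log r with hb
  have hadef : a = Real.log (1 - p) - Real.log (1 - r * p) :=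
    Real.log_div hp'.ne' hrp'.ne'
  -- a < (1-p)/(1-rp) - 1
  have hx1 : a < (1 - p) / (1 - r * p) - 1 := by
    apply Real.log_lt_sub_one_of_pos (div_pos hp' hrp')
    intro h
    rw [div_eq_one_iff_eq hrp'.ne'] at h
    nlinarith
  have h1 : (1 - r * p) * a < r * p - p := by
    have e : (1 - r * p) * ((1 - p) / (1 - r * p) - 1) = r * p - p := by
      field_simp
      ring
    nlinarith
  -- (1-rp)/(1-p) side
  have hx2 : Real.log ((1 - r * p) / (1 - p)) < (1 - r * p) / (1 - p) - 1 := by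
    apply Real.log_lt_sub_one_of_pos (div_pos hrp' hp')
    intro h
    rw [div_eq_one_iff_eq hp'.ne'] at h
    nlinarith
  have h2 : r * p - p < (1 - p) * a := by
    have e2 : Real.log ((1 - r * p) / (1 - p)) = -a := by
      rw [Real.log_div hrp'.ne' hp'.ne', hadef]; ring
    have e : (1 - p) * ((1 - r * p) / (1 - p) - 1) = p - r * p := by
      field_simp
      ring
    nlinarith [hx2]
  have h3 : b < r - 1 := Real.log_lt_sub_one_of_pos hr0 hr1.ne
  have h4 : r - 1 < r * b := by
    have hx : Real.log r⁻¹ < r⁻¹ - 1 :=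
      Real.log_lt_sub_one_of_pos (inv_pos.mpr hr0) (by
        intro h; rw [inv_eq_one] at h; exact hr1.ne h)
    rw [Real.log_inv] at hx
    have := mul_lt_mul_of_pos_left hx hr0
    rw [mul_sub, mul_inv_cancel₀ hr0.ne'] at this
    nlinarith
  have ha0 : a < 0 := by nlinarith
  have hb0 : b < 0 := Real.log_neg hr0 hr1
  have hsum : b + a < 0 := by linarith
  have hbeta : betaFn r p = a / (b + a) := rfl
  have hlow : r * p < betaFn r p := by
    rw [hbeta, lt_div_iff_of_neg hsum]
    nlinarith [mul_lt_mul_of_pos_left h4 hp0]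
  have hhigh : betaFn r p < p := by
    rw [hbeta, div_lt_iff_of_neg hsum]
    nlinarith [mul_lt_mul_of_pos_left h3 hp0]
  refine ⟨hlow, hhigh, ?_⟩
  have h0β : 0 < betaFn r p := lt_trans hrp0 hlow
  have hβ1 : betaFn r p < 1 := lt_trans hhigh hp1
  have h1β : 0 < 1 - betaFn r p := by linarith
  have hkey : betaFn r p * (b + a) = a := by
    rw [hbeta]
    rw [div_mul_eq_mul_div, mul_div_assoc, div_self hsum.ne, mul_one]
  unfold binRelEnt
  rw [Real.log_div h0β.ne' hp0.ne', Real.log_div h0β.ne' hrp0.ne',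
    Real.log_div h1β.ne' hp'.ne', Real.log_div h1β.ne' hrp'.ne',
    Real.log_mul hr0.ne' hp0.ne']
  have hadef' : Real.log (1 - r * p) = Real.log (1 - p) - a := by
    rw [hadef]; ring
  rw [hadef', ← hb]
  linear_combination hkey
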